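/- Let ω be nondecreasing with ω(0) = 0 and ω(2) < 2ω(1), and let G = (N, E) be a t-regular graph with |N| ≥ k ≥ 1. Construct the election with candidate set C = N ∪ {p}, one vote {u, u'} for each edge {u, u'} ∈ E, and t votes {p}. Then there exists an ω-Thiele winning k-committee not containing p if and only if G has an independent set of size k. Consequently, p belongs to all ω-Thiele winning k-committees if and only if G has no independent set of size k. -/

import Mathlib

namespace Stmt11

variable {α : Type*} [DecidableEq α]

/-- The `ω`-Thiele score of a committee `w`. -/
def thieleScore (ω : ℕ → ℝ) (V : Multiset (Finset (Option α))) (w : Finset (Option α)) : ℝ :=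
  (V.map (fun v => ω (v ∩ w).card)).sum

/-- `w` is an `ω`-Thiele winning `k`-committee of the election `(C, V)`. -/
def thieleWins (ω : ℕ → ℝ) (C : Finset (Option α)) (V : Multiset (Finset (Option α)))
    (k : ℕ) (w : Finset (Option α)) : Prop :=
  w ⊆ C ∧ w.card = k ∧ ∀ w' ⊆ C, w'.card = k → thieleScore ω V w' ≤ thieleScore ω V w

lemma score_eq (ω : ℕ → ℝ) (E : Finset (Finset α)) (t : ℕ) (w : Finset (Option α)) :
    thieleScore ω (E.val.map (fun e => e.image some) +
      Multiset.replicate t ({none} : Finset (Option α))) w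
    = (∑ e ∈ E, ω ((e.image some ∩ w).card)) + (t : ℝ) * ω (({none} ∩ w).card) := by
  rw [thieleScore, Multiset.map_add, Multiset.sum_add, Multiset.map_map, Multiset.map_replicate,
    Multiset.sum_replicate, nsmul_eq_mul]
  rfl

lemma inter_card_eq (e : Finset α) (w : Finset (Option α)) :
    (e.image some ∩ w).card = (e.filter (fun u => some u ∈ w)).card := by
  rw [show (e.image some ∩ w) = (e.filter (fun u => some u ∈ w)).image some by
        ext x
        simp only [Finset.mem_inter, Finset.mem_image, Finset.mem_filter]
        constructor
        · rintro ⟨⟨u, hu, rfl⟩, hx⟩; exact ⟨u, ⟨hu, hx⟩, rfl⟩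
        · rintro ⟨u, ⟨hu, hw⟩, rfl⟩; exact ⟨⟨u, hu, rfl⟩, hw⟩]
  exact Finset.card_image_of_injective _ (Option.some_injective α)

lemma omega_le (ω : ℕ → ℝ) (hω0 : ω 0 = 0) (hω2 : ω 2 < 2 * ω 1)
    {c : ℕ} (hc : c ≤ 2) : ω c ≤ c * ω 1 := by
  interval_cases c
  · simp [hω0]
  · simp
  · push_cast; linarith

lemma double_count (E : Finset (Finset α)) (N : Finset α) (t : ℕ)
    (hreg : ∀ u ∈ N, (E.filter (fun e => u ∈ e)).card = t)
    (S : Finset α) (hS : S ⊆ N) :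
    ∑ e ∈ E, (e.filter (fun u => u ∈ S)).card = t * S.card := by
  have h1 : ∀ e ∈ E, (e.filter (fun u => u ∈ S)).card = ∑ u ∈ S, if u ∈ e then 1 else 0 := by
    intro e _
    rw [← Finset.card_filter]
    congr 1
    ext u
    simp only [Finset.mem_filter]
    tauto
  rw [Finset.sum_congr rfl h1, Finset.sum_comm]
  have h2 : ∀ u ∈ S, (∑ e ∈ E, if u ∈ e then 1 else 0) = t := by
    intro u hu
    rw [← Finset.card_filter]
    exact hreg u (hS hu)
  rw [Finset.sum_congr rfl h2, Finset.sum_const, smul_eq_mul, mul_comm]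

lemma score_le_bound (ω : ℕ → ℝ) (hω0 : ω 0 = 0) (hω2 : ω 2 < 2 * ω 1)
    (N : Finset α) (E : Finset (Finset α)) (t : ℕ)
    (hE2 : ∀ e ∈ E, e.card = 2) (hEN : ∀ e ∈ E, e ⊆ N)
    (hreg : ∀ u ∈ N, (E.filter (fun e => u ∈ e)).card = t)
    (w : Finset (Option α)) (hwC : w ⊆ insert none (N.image some)) :
    (∑ e ∈ E, ω ((e.image some ∩ w).card)) + (t : ℝ) * ω (({none} ∩ w).card)
      ≤ (t : ℝ) * w.card * ω 1 := by
  set S := N.filter (fun u => some u ∈ w) with hSdef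
  have hSN : S ⊆ N := Finset.filter_subset _ _
  have hfil : ∀ e ∈ E, e.filter (fun u => some u ∈ w) = e.filter (fun u => u ∈ S) := by
    intro e he
    apply Finset.filter_congr
    intro u hu
    simp [hSdef, hEN e he hu]
  have hwdec : w = S.image some ∪ ({none} ∩ w) := by
    ext x
    cases x with
    | none => simp [hSdef]
    | some u =>
      simp only [Finset.mem_union, Finset.mem_image, Finset.mem_inter, Finset.mem_singleton,
        hSdef, Finset.mem_filter]
      constructor
      · intro h
        have := hwC h
        simp only [Finset.mem_insert, Finset.mem_image] at this
        rcases this with h' | ⟨v, hv, hv'⟩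
        · exact absurd h' (by simp)
        · exact Or.inl ⟨v, ⟨hv, by rwa [hv']⟩, hv'⟩
      · rintro (⟨v, ⟨_, hv⟩, heq⟩ | ⟨h, _⟩)
        · rwa [← heq]
        · simp at h
  have hdisj : Disjoint (S.image some) ({none} ∩ w) := by
    simp only [Finset.disjoint_left, Finset.mem_image, Finset.mem_inter, Finset.mem_singleton]
    rintro x ⟨v, _, rfl⟩ ⟨h, _⟩
    simp at h
  have hcard : w.card = S.card + ({none} ∩ w).card := by
    conv_lhs => rw [hwdec]
    rw [Finset.card_union_of_disjoint hdisj,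
      Finset.card_image_of_injective _ (Option.some_injective α)]
  have hc1 : ({none} ∩ w).card ≤ 1 := by
    calc ({none} ∩ w).card ≤ ({none} : Finset (Option α)).card :=
      Finset.card_le_card (Finset.inter_subset_left)
    _ = 1 := Finset.card_singleton _
  have hsum : (∑ e ∈ E, ω ((e.image some ∩ w).card))
      ≤ (∑ e ∈ E, ((e.filter (fun u => u ∈ S)).card : ℝ)) * ω 1 := by
    rw [Finset.sum_mul]
    apply Finset.sum_le_sum
    intro e he
    rw [inter_card_eq, hfil e he]
    exact omega_le ω hω0 hω2 (le_trans (Finset.card_filter_le _ _) (le_of_eq (hE2 e he)))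
  have hdc : (∑ e ∈ E, ((e.filter (fun u => u ∈ S)).card : ℝ)) = (t : ℝ) * S.card := by
    rw [← Nat.cast_sum, double_count E N t hreg S hSN]
    push_cast; ring
  have h2 : (t : ℝ) * ω (({none} ∩ w).card) ≤ (t : ℝ) * (({none} ∩ w).card * ω 1) := by
    apply mul_le_mul_of_nonneg_left _ (Nat.cast_nonneg t)
    exact omega_le ω hω0 hω2 (le_trans hc1 (by norm_num))
  have hcast : (w.card : ℝ) = (S.card : ℝ) + (({none} ∩ w).card : ℝ) := by
    rw [hcard]; push_cast; ring
  calc (∑ e ∈ E, ω ((e.image some ∩ w).card)) + (t : ℝ) * ω (({none} ∩ w).card)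
      ≤ (t : ℝ) * S.card * ω 1 + (t : ℝ) * (({none} ∩ w).card * ω 1) := by
        apply add_le_add _ h2
        rw [← hdc]; exact hsum
    _ = (t : ℝ) * w.card * ω 1 := by rw [hcast]; ring

lemma filter_card_le_one {e S : Finset α} (he : e.card = 2) (hns : ¬ e ⊆ S) :
    (e.filter (fun u => u ∈ S)).card ≤ 1 := by
  by_contra h
  push_neg at h
  have h2 : e.card ≤ (e.filter (fun u => u ∈ S)).card := by omega
  have heq := Finset.eq_of_subset_of_card_le (Finset.filter_subset _ _) h2
  apply hns
  intro u hu
  have : u ∈ e.filter (fun u => u ∈ S) := by rw [heq]; exact hu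
  exact (Finset.mem_filter.mp this).2

lemma indep_score (ω : ℕ → ℝ) (hω0 : ω 0 = 0)
    (N : Finset α) (E : Finset (Finset α)) (t : ℕ)
    (hE2 : ∀ e ∈ E, e.card = 2)
    (hreg : ∀ u ∈ N, (E.filter (fun e => u ∈ e)).card = t)
    (S : Finset α) (hSN : S ⊆ N) (hind : ∀ e ∈ E, ¬ e ⊆ S) :
    (∑ e ∈ E, ω ((e.image some ∩ S.image some).card)) = (t : ℝ) * S.card * ω 1 := by
  have key : ∀ e ∈ E, ω ((e.image some ∩ S.image some).card)
      = ((e.filter (fun u => u ∈ S)).card : ℝ) * ω 1 := by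
    intro e he
    rw [inter_card_eq]
    have hfe : e.filter (fun u => some u ∈ S.image some) = e.filter (fun u => u ∈ S) := by
      apply Finset.filter_congr
      intro u _
      simp [Finset.mem_image]
    rw [hfe]
    have hc : (e.filter (fun u => u ∈ S)).card ≤ 1 :=
      filter_card_le_one (hE2 e he) (hind e he)
    rcases Nat.le_one_iff_eq_zero_or_eq_one.mp hc with h | h <;> rw [h] <;> simp [hω0]
  rw [Finset.sum_congr rfl key, ← Finset.sum_mul, ← Nat.cast_sum,
    double_count E N t hreg S hSN]
  push_cast; ring

lemma swap_strict (ω : ℕ → ℝ) (hω0 : ω 0 = 0) (hω2 : ω 2 < 2 * ω 1)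
    (N : Finset α) (E : Finset (Finset α)) (t : ℕ)
    (hE2 : ∀ e ∈ E, e.card = 2)
    (hreg : ∀ u ∈ N, (E.filter (fun e => u ∈ e)).card = t)
    (S : Finset α) (hSN : S ⊆ N) {e₀ : Finset α} (he₀ : e₀ ∈ E) (he₀S : e₀ ⊆ S)
    {x : α} (hx : x ∈ e₀) :
    (∑ e ∈ E, ω ((e.filter (fun u => u ∈ S)).card))
      < (∑ e ∈ E, ω ((e.filter (fun u => u ∈ S.erase x)).card)) + (t : ℝ) * ω 1 := by
  have hxS : x ∈ S := he₀S hx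
  have hxN : x ∈ N := hSN hxS
  have ht : (t : ℝ) * ω 1 = ∑ e ∈ E, (if x ∈ e then ω 1 else 0) := by
    rw [← Finset.sum_filter, Finset.sum_const, hreg x hxN, nsmul_eq_mul]
  rw [ht, ← Finset.sum_add_distrib]
  apply Finset.sum_lt_sum
  · intro e he
    by_cases hxe : x ∈ e
    · simp only [hxe, if_true]
      have hins : e.filter (fun u => u ∈ S) = insert x (e.filter (fun u => u ∈ S.erase x)) := by
        ext u
        simp only [Finset.mem_filter, Finset.mem_insert, Finset.mem_erase]
        constructor
        · rintro ⟨hue, huS⟩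
          by_cases h : u = x
          · exact Or.inl h
          · exact Or.inr ⟨hue, h, huS⟩
        · rintro (rfl | ⟨hue, _, huS⟩)
          · exact ⟨hxe, hxS⟩
          · exact ⟨hue, huS⟩
      have hnm : x ∉ e.filter (fun u => u ∈ S.erase x) := by
        simp [Finset.mem_filter]
      rw [hins, Finset.card_insert_of_notMem hnm]
      have hc' : (e.filter (fun u => u ∈ S.erase x)).card ≤ 1 := by
        have hsub : e.filter (fun u => u ∈ S.erase x) ⊆ e.erase x := by
          intro u hu
          simp only [Finset.mem_filter, Finset.mem_erase] at hu ⊢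
          exact ⟨hu.2.1, hu.1⟩
        calc (e.filter (fun u => u ∈ S.erase x)).card ≤ (e.erase x).card :=
            Finset.card_le_card hsub
          _ = e.card - 1 := Finset.card_erase_of_mem hxe
          _ = 1 := by rw [hE2 e he]
      rcases Nat.le_one_iff_eq_zero_or_eq_one.mp hc' with h | h <;> rw [h]
      · simp [hω0]
      · linarith
    · simp only [hxe, if_false, add_zero]
      have : e.filter (fun u => u ∈ S) = e.filter (fun u => u ∈ S.erase x) := by
        apply Finset.filter_congr
        intro u hu
        have : u ≠ x := fun h => hxe (h ▸ hu)
        simp [Finset.mem_erase, this]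
      rw [this]
  · refine ⟨e₀, he₀, ?_⟩
    have h1 : e₀.filter (fun u => u ∈ S) = e₀ := by
      apply Finset.filter_true_of_mem
      intro u hu
      exact he₀S hu
    have h2 : e₀.filter (fun u => u ∈ S.erase x) = e₀.erase x := by
      ext u
      simp only [Finset.mem_filter, Finset.mem_erase]
      constructor
      · rintro ⟨hue, hne, _⟩; exact ⟨hne, hue⟩
      · rintro ⟨hne, hue⟩; exact ⟨hue, hne, he₀S hue⟩
    rw [h1, h2, hE2 e₀ he₀, Finset.card_erase_of_mem hx, hE2 e₀ he₀]
    simp only [hx, if_true]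
    norm_num
    linarith

lemma none_inter_image (S : Finset α) :
    ({none} : Finset (Option α)) ∩ S.image some = ∅ := by
  ext x
  simp only [Finset.mem_inter, Finset.mem_singleton, Finset.mem_image, Finset.notMem_empty,
    iff_false, not_and]
  rintro rfl ⟨u, _, h⟩
  exact Option.some_ne_none u h

lemma none_inter_insert (S : Finset α) :
    ({none} : Finset (Option α)) ∩ insert none (S.image some) = {none} := by
  apply Finset.inter_eq_left.mpr
  simp

lemma image_inter_insert (e S : Finset α) :
    (e.image some ∩ insert none (S.image some)).card = (e.filter (fun u => u ∈ S)).card := by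
  rw [inter_card_eq]
  congr 1
  apply Finset.filter_congr
  intro u _
  simp

lemma image_inter_image (e S : Finset α) :
    (e.image some ∩ S.image some).card = (e.filter (fun u => u ∈ S)).card := by
  rw [inter_card_eq]
  congr 1
  apply Finset.filter_congr
  intro u _
  simp

/-- Election built from a `t`-regular graph with vertex set `N` and edge set `E`
(edges are 2-element subsets of `N`): candidates are the vertices (as `some u`)
together with `p = none`; for each edge `{u, u'}` there is one vote `{u, u'}`, and
there are `t` votes `{p}`.  There is an `ω`-Thiele winning `k`-committee not
containing `p` iff the graph has an independent set of size `k`; consequently, `p`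
belongs to all winning `k`-committees iff there is no independent set of size `k`. -/
theorem thiele_winner_vs_independent_set
    (N : Finset α) (E : Finset (Finset α)) (t k : ℕ)
    (hE2 : ∀ e ∈ E, e.card = 2) (hEN : ∀ e ∈ E, e ⊆ N)
    (hreg : ∀ u ∈ N, (E.filter (fun e => u ∈ e)).card = t)
    (hk1 : 1 ≤ k) (hk : k ≤ N.card)
    (ω : ℕ → ℝ) (hω0 : ω 0 = 0) (hmono : Monotone ω) (hω2 : ω 2 < 2 * ω 1)
    (C : Finset (Option α)) (hC : C = insert none (N.image some))
    (V : Multiset (Finset (Option α)))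
    (hV : V = E.val.map (fun e => e.image some) +
      Multiset.replicate t ({none} : Finset (Option α))) :
    ((∃ w, thieleWins ω C V k w ∧ none ∉ w) ↔
      ∃ S ⊆ N, S.card = k ∧ ∀ e ∈ E, ¬ e ⊆ S) ∧
    ((∀ w, thieleWins ω C V k w → none ∈ w) ↔
      ¬ ∃ S ⊆ N, S.card = k ∧ ∀ e ∈ E, ¬ e ⊆ S) := by
  subst hC hV
  have main : (∃ w, thieleWins ω (insert none (N.image some))
      (E.val.map (fun e => e.image some) + Multiset.replicate t ({none} : Finset (Option α)))
      k w ∧ none ∉ w) ↔ ∃ S ⊆ N, S.card = k ∧ ∀ e ∈ E, ¬ e ⊆ S := by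
    constructor
    · rintro ⟨w, ⟨hwC, hwk, hmax⟩, hnone⟩
      set S := N.filter (fun u => some u ∈ w) with hSdef
      have hSN : S ⊆ N := Finset.filter_subset _ _
      have hw : w = S.image some := by
        ext x
        cases x with
        | none => simp [hSdef, hnone]
        | some u =>
          simp only [Finset.mem_image, hSdef, Finset.mem_filter]
          constructor
          · intro h
            have := hwC h
            simp only [Finset.mem_insert, Finset.mem_image] at this
            rcases this with h' | ⟨v, hv, hv'⟩
            · exact absurd h' (by simp)
            · exact ⟨v, ⟨hv, by rwa [hv']⟩, hv'⟩
          · rintro ⟨v, ⟨_, hv⟩, heq⟩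
            rwa [← heq]
      have hSk : S.card = k := by
        rw [← hwk, hw, Finset.card_image_of_injective _ (Option.some_injective α)]
      refine ⟨S, hSN, hSk, ?_⟩
      intro e₀ he₀ he₀S
      obtain ⟨x, hx⟩ : e₀.Nonempty := Finset.card_pos.mp (by rw [hE2 e₀ he₀]; norm_num)
      have hxS : x ∈ S := he₀S hx
      set w' := insert none ((S.erase x).image some) with hw'def
      have hnm : (none : Option α) ∉ (S.erase x).image some := by simp
      have hw'C : w' ⊆ insert none (N.image some) := by
        intro y hy
        rw [hw'def, Finset.mem_insert] at hy
        rcases hy with rfl | hy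
        · exact Finset.mem_insert_self _ _
        · apply Finset.mem_insert_of_mem
          obtain ⟨v, hv, rfl⟩ := Finset.mem_image.mp hy
          exact Finset.mem_image_of_mem _ (hSN (Finset.mem_of_mem_erase hv))
      have hw'k : w'.card = k := by
        rw [hw'def, Finset.card_insert_of_notMem hnm,
          Finset.card_image_of_injective _ (Option.some_injective α),
          Finset.card_erase_of_mem hxS, hSk]
        omega
      have hle := hmax w' hw'C hw'k
      rw [score_eq, score_eq] at hle
      have hs1 : (∑ e ∈ E, ω ((e.image some ∩ w).card)) + (t : ℝ) * ω (({none} ∩ w).card)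
          = ∑ e ∈ E, ω ((e.filter (fun u => u ∈ S)).card) := by
        rw [hw, none_inter_image, Finset.card_empty, hω0, mul_zero, add_zero]
        exact Finset.sum_congr rfl fun e _ => by rw [image_inter_image]
      have hs2 : (∑ e ∈ E, ω ((e.image some ∩ w').card)) + (t : ℝ) * ω (({none} ∩ w').card)
          = (∑ e ∈ E, ω ((e.filter (fun u => u ∈ S.erase x)).card)) + (t : ℝ) * ω 1 := by
        rw [hw'def, none_inter_insert, Finset.card_singleton]
        congr 1
        exact Finset.sum_congr rfl fun e _ => by rw [image_inter_insert]
      rw [hs1, hs2] at hle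
      exact absurd hle (not_le.mpr
        (swap_strict ω hω0 hω2 N E t hE2 hreg S hSN he₀ he₀S hx))
    · rintro ⟨S, hSN, hSk, hind⟩
      refine ⟨S.image some, ⟨?_, ?_, ?_⟩, by simp⟩
      · intro y hy
        apply Finset.mem_insert_of_mem
        obtain ⟨v, hv, rfl⟩ := Finset.mem_image.mp hy
        exact Finset.mem_image_of_mem _ (hSN hv)
      · rw [Finset.card_image_of_injective _ (Option.some_injective α), hSk]
      · intro w' hw'C hw'k
        rw [score_eq, score_eq]
        have hub := score_le_bound ω hω0 hω2 N E t hE2 hEN hreg w' hw'C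
        rw [hw'k] at hub
        have heq : (∑ e ∈ E, ω ((e.image some ∩ S.image some).card))
            + (t : ℝ) * ω (({none} ∩ S.image some).card) = (t : ℝ) * k * ω 1 := by
          rw [none_inter_image, Finset.card_empty, hω0, mul_zero, add_zero,
            indep_score ω hω0 N E t hE2 hreg S hSN hind, hSk]
        rw [heq]
        exact hub
  refine ⟨main, ?_⟩
  rw [← main]
  constructor
  · rintro hall ⟨w, hw, hn⟩
    exact hn (hall w hw)
  · intro hne w hw
    by_contra hn
    exact hne ⟨w, hw, hn⟩


end Stmt11
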